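/- Let x† = (n^{-3/2})_{n≥1} ∈ ℓ²(ℕ) and T = diag((n^{-1/2})_{n≥1}), so T*T has eigenvalues λ_n = n^{-1}. Then sup_{N≥1} N² Σ_{n≥N} n^{-3} is finite and equals ζ(3) (attained at N = 1), while Σ_{n≥1} n^{-1} = ∞; hence |||x†|||₁ < ∞ but x† is not in the range of T*T with ‖(T*T)^{-1}x†‖ finite, i.e., x† ∈ 𝕏₁ \ X₁. -/

import Mathlib

lemma sumInv3 : Summable (fun n : ℕ => ((n:ℝ)^3)⁻¹) :=
  Real.summable_nat_pow_inv.mpr (by norm_num)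

lemma sumShift : Summable (fun n : ℕ => (((n:ℝ)+1)^3)⁻¹) := by
  have h := (summable_nat_add_iff 1).mpr sumInv3
  exact h.congr (by intro n; push_cast; ring_nf)

lemma gsum (N : ℕ) : Summable (fun n : ℕ => if N ≤ n then ((n:ℝ)^3)⁻¹ else 0) := by
  apply Summable.of_nonneg_of_le _ _ sumInv3
  · intro n; split <;> positivity
  · intro n; split
    · exact le_rfl
    · positivity

lemma key (m : ℕ) (hm : 2 ≤ m) :
    ((m:ℝ)^3)⁻¹ ≤ (2*((m:ℝ)-1)*(m:ℝ))⁻¹ - (2*((m:ℝ)+1-1)*((m:ℝ)+1))⁻¹ := by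
  have hr : (2:ℝ) ≤ (m:ℝ) := by exact_mod_cast hm
  set r : ℝ := (m:ℝ)
  have h1 : (0:ℝ) < r - 1 := by linarith
  have h2 : (0:ℝ) < r := by linarith
  have heq : (2*(r-1)*r)⁻¹ - (2*(r+1-1)*(r+1))⁻¹ = ((r-1)*r*(r+1))⁻¹ := by
    rw [show r + 1 - 1 = r by ring]
    field_simp
    ring
  rw [heq]
  apply inv_anti₀
  · positivity
  · nlinarith

lemma tailbound (N : ℕ) (hN : 2 ≤ N) :
    (∑' n : ℕ, (if N ≤ n then ((n:ℝ)^3)⁻¹ else 0)) ≤ (2*((N:ℝ)-1)*N)⁻¹ := by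
  set a : ℕ → ℝ := fun m => (2*((m:ℝ)-1)*(m:ℝ))⁻¹ with ha
  have hanonneg : ∀ m : ℕ, 0 ≤ a m := by
    intro m
    have h01 : (m:ℝ) = 0 ∨ 1 ≤ (m:ℝ) := by
      rcases Nat.eq_zero_or_pos m with h | h
      · left; simp [h]
      · right; exact_mod_cast h
    simp only [ha]
    apply inv_nonneg.mpr
    rcases h01 with h | h
    · rw [h]; ring_nf; exact le_rfl
    · nlinarith
  have hnonneg : ∀ i : ℕ, 0 ≤ (if N ≤ i then ((i:ℝ)^3)⁻¹ else 0) := by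
    intro i; split <;> positivity
  apply Summable.tsum_le_of_sum_range_le (gsum N)
  intro n
  have mono : ∀ k, ∑ i ∈ Finset.range (N+k), (if N ≤ i then ((i:ℝ)^3)⁻¹ else 0)
      ≤ a N - a (N+k) := by
    intro k
    induction k with
    | zero =>
      rw [Nat.add_zero, sub_self]
      apply le_of_eq
      apply Finset.sum_eq_zero
      intro i hi
      rw [if_neg]
      exact Nat.not_le.mpr (Finset.mem_range.mp hi)
    | succ k ih =>
      rw [Nat.add_succ, Finset.sum_range_succ, if_pos (Nat.le_add_right N k)]
      have hk := key (N+k) (le_trans hN (Nat.le_add_right N k))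
      have e : a (N+k+1) = (2*(((N+k:ℕ):ℝ)+1-1)*(((N+k:ℕ):ℝ)+1))⁻¹ := by
        simp only [ha]; push_cast; ring_nf
      have ek : a (N+k) = (2*(((N+k:ℕ):ℝ)-1)*((N+k:ℕ):ℝ))⁻¹ := rfl
      have : ((((N+k:ℕ)):ℝ)^3)⁻¹ ≤ a (N+k) - a (N+k+1) := by rw [e, ek]; exact hk
      linarith
  calc ∑ i ∈ Finset.range n, (if N ≤ i then ((i:ℝ)^3)⁻¹ else 0)
      ≤ ∑ i ∈ Finset.range (N+n), (if N ≤ i then ((i:ℝ)^3)⁻¹ else 0) := by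
        apply Finset.sum_le_sum_of_subset_of_nonneg
        · exact Finset.range_subset_range.mpr (Nat.le_add_left n N)
        · intro i _ _; exact hnonneg i
    _ ≤ a N - a (N+n) := mono n
    _ ≤ a N := by linarith [hanonneg (N+n)]

/-- Example: for `x† = (n^(-3/2))_{n≥1} ∈ ℓ²` and `T = diag(n^(-1/2))`, so that
`T*T` has eigenvalues `1/n`, the quantity `|||x†|||₁² = sup_{N≥1} N² Σ_{n≥N} n⁻³`
is finite, attained at `N = 1`, where it equals `ζ(3) = Σ_{n≥1} n⁻³`; while
`‖x†‖₁² = Σ_{n≥1} n⁻¹ = ∞`.  Hence `x† ∈ 𝕏₁ \ X₁`. -/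
theorem stmt19 :
    IsGreatest
      {y : ℝ | ∃ N : ℕ, 1 ≤ N ∧
        y = (N:ℝ) ^ 2 * ∑' n : ℕ, (if N ≤ n then (((n:ℝ) ^ 3)⁻¹) else 0)}
      (∑' n : ℕ, (((n:ℝ) + 1) ^ 3)⁻¹) ∧
    ¬ Summable (fun n : ℕ => ((n:ℝ) + 1)⁻¹) := by
  have hone : (1:ℝ) ^ 2 * ∑' n : ℕ, (if 1 ≤ n then (((n:ℝ) ^ 3)⁻¹) else 0)
      = ∑' n : ℕ, (((n:ℝ) + 1) ^ 3)⁻¹ := by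
    rw [one_pow, one_mul]
    have h0 : ∑ i ∈ Finset.range 1, (if 1 ≤ i then ((i:ℝ)^3)⁻¹ else 0) = 0 := by norm_num
    rw [← Summable.sum_add_tsum_nat_add 1 (gsum 1), h0, zero_add]
    apply tsum_congr
    intro n
    rw [if_pos (Nat.le_add_left 1 n)]
    push_cast
    ring_nf
  have htarget1 : (1:ℝ) ≤ ∑' n : ℕ, (((n:ℝ) + 1) ^ 3)⁻¹ := by
    have := Summable.le_tsum sumShift 0 (fun i _ => by positivity)
    simpa using this
  constructor
  · constructor
    · exact ⟨1, le_rfl, by rw [Nat.cast_one, hone]⟩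
    · rintro y ⟨N, hN, rfl⟩
      rcases eq_or_lt_of_le hN with h1 | h2
      · rw [← h1] at *
        rw [← hone]
        norm_num
      · have hN2 : 2 ≤ N := h2
        have hb := tailbound N hN2
        have hNr : (2:ℝ) ≤ (N:ℝ) := by exact_mod_cast hN2
        have hpos : (0:ℝ) < 2*((N:ℝ)-1)*N := by nlinarith
        have : (N:ℝ)^2 * (∑' n : ℕ, (if N ≤ n then (((n:ℝ)^3)⁻¹) else 0))
            ≤ (N:ℝ)^2 * (2*((N:ℝ)-1)*N)⁻¹ := by
          apply mul_le_mul_of_nonneg_left hb (by positivity)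
        have hle1 : (N:ℝ)^2 * (2*((N:ℝ)-1)*N)⁻¹ ≤ 1 := by
          rw [mul_inv_le_iff₀ hpos, one_mul]
          nlinarith
        linarith
  · intro h
    apply Real.not_summable_natCast_inv
    rw [← summable_nat_add_iff 1]
    exact h.congr (by intro n; push_cast; ring_nf)
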